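/- Let K be a field of characteristic zero, let s ≥ 1 and r_1,…,r_s ≥ 1 be integers, and let R = K[x, y_{1,1},…,y_{1,r_1},…,y_{s,1},…,y_{s,r_s}]. Let D = ∂_x + Σ_{i=1}^{s} Σ_{j=1}^{r_i} (a_i(x)·y_{i,j} + b_{i,j}(x))·∂_{i,j} be the K-derivation of R with a_i, b_{i,j} ∈ K[x] and a_i ≠ a_l for i ≠ l. If for every i ∈ {1,…,s} and every j ∈ {1,…,r_i} one has deg a_i > deg b_{i,j}, and for every i the polynomials b_{i,1},…,b_{i,r_i} are linearly independent over K, then Im D = D(R) is not a Mathieu–Zhao space of R. -/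

import Mathlib

set_option linter.unusedSectionVars false

open MvPolynomial

namespace Statement2Aux

open Polynomial

variable {K : Type*} [Field K] [CharZero K]

noncomputable section

/-- The operator `c ↦ c' + p c` on `K[x]`. -/
def DmP (p : Polynomial K) : Polynomial K →ₗ[K] Polynomial K :=
  Polynomial.derivative + LinearMap.mulLeft K p

@[simp] lemma DmP_apply (p c : Polynomial K) :
    DmP p c = Polynomial.derivative c + p * c := rfl

lemma DmP_zero : DmP (0 : Polynomial K) = Polynomial.derivative :=
  LinearMap.ext fun c => by rw [DmP_apply, zero_mul, add_zero]

lemma degree_DmP {p : Polynomial K} (hp : p ≠ 0) {c : Polynomial K} (hc : c ≠ 0) :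
    (DmP p c).degree = p.degree + c.degree := by
  have h2 : (Polynomial.derivative c).degree < (p * c).degree := by
    refine lt_of_lt_of_le (Polynomial.degree_derivative_lt hc) ?_
    rw [Polynomial.degree_mul]
    exact le_add_of_nonneg_left (Polynomial.zero_le_degree_iff.2 hp)
  rw [DmP_apply, Polynomial.degree_add_eq_right_of_degree_lt h2, Polynomial.degree_mul]

lemma DmP_ker {p : Polynomial K} (hp : p ≠ 0) : LinearMap.ker (DmP p) = ⊥ := by
  rw [LinearMap.ker_eq_bot']
  intro c hc
  by_contra h0
  have := degree_DmP hp h0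
  rw [hc, Polynomial.degree_zero] at this
  rcases WithBot.add_eq_bot.mp this.symm with h | h
  · exact hp (Polynomial.degree_eq_bot.mp h)
  · exact h0 (Polynomial.degree_eq_bot.mp h)

lemma degree_le_of_mem_range {p : Polynomial K} (hp : p ≠ 0) {u : Polynomial K}
    (hu : u ∈ LinearMap.range (DmP p)) (h0 : u ≠ 0) : p.degree ≤ u.degree := by
  obtain ⟨c, rfl⟩ := hu
  have hc : c ≠ 0 := by rintro rfl; simp at h0
  rw [degree_DmP hp hc]
  have : (0 : WithBot ℕ) ≤ c.degree := Polynomial.zero_le_degree_iff.2 hc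
  calc p.degree = p.degree + 0 := (add_zero _).symm
    _ ≤ p.degree + c.degree := add_le_add_right this _

lemma span_degree_lt {ι : Type*} (v : ι → Polynomial K) {d : WithBot ℕ} (hd0 : ⊥ < d)
    (hv : ∀ i, (v i).degree < d) {u : Polynomial K}
    (hu : u ∈ Submodule.span K (Set.range v)) : u.degree < d := by
  induction hu using Submodule.span_induction with
  | mem x hx => obtain ⟨i, rfl⟩ := hx; exact hv i
  | zero => simpa using hd0
  | add x y hx hy ihx ihy =>
    exact lt_of_le_of_lt (Polynomial.degree_add_le x y) (max_lt ihx ihy)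
  | smul a x hx ih => exact lt_of_le_of_lt (Polynomial.degree_smul_le a x) ih

/-- A functional with prescribed values on a linearly independent family. -/
lemma exists_dual_li {M : Type*} [AddCommGroup M] [Module K M] {ι : Type*} (v : ι → M)
    (li : LinearIndependent K v) (w : ι → K) :
    ∃ φ : M →ₗ[K] K, ∀ i, φ (v i) = w i := by
  classical
  have hr := (linearIndepOn_id_range_iff li.injective).mpr li
  set bas := Module.Basis.extend hr with hbas
  refine ⟨bas.constr K (fun e => if h : ∃ i, v i = (e : M) then w h.choose else 0), fun i => ?_⟩
  have hmem : v i ∈ hr.extend (Set.subset_univ _) :=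
    hr.subset_extend _ ⟨i, rfl⟩
  have : v i = bas ⟨v i, hmem⟩ := (Module.Basis.extend_apply_self hr ⟨v i, hmem⟩).symm
  rw [this, Module.Basis.constr_basis]
  have hex : ∃ j, v j = ((⟨v i, hmem⟩ : hr.extend (Set.subset_univ _)) : M) := ⟨i, rfl⟩
  rw [dif_pos hex]
  congr 1
  exact li.injective hex.choose_spec

/-- A functional vanishing on the range of `DmP p` with prescribed values on a
linearly independent family of polynomials of degree `< deg p`. -/
lemma exists_dual {p : Polynomial K} (hp : p ≠ 0) {ι : Type*} (v : ι → Polynomial K)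
    (li : LinearIndependent K v) (hv : ∀ i, (v i).degree < p.degree) (w : ι → K) :
    ∃ δ : Polynomial K →ₗ[K] K, δ.comp (DmP p) = 0 ∧ ∀ i, δ (v i) = w i := by
  classical
  set W := LinearMap.range (DmP (K := K) p) with hW
  have hdisj : Disjoint (Submodule.span K (Set.range v)) (LinearMap.ker W.mkQ) := by
    rw [Submodule.ker_mkQ]
    rw [Submodule.disjoint_def]
    intro u hu1 hu2
    by_contra h0
    have h1 : u.degree < p.degree :=
      span_degree_lt v (bot_lt_iff_ne_bot.mpr (fun hb => hp (Polynomial.degree_eq_bot.mp hb))) hv hu1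
    · exact absurd (degree_le_of_mem_range hp hu2 h0) (not_le.mpr h1)
  have liQ : LinearIndependent K (W.mkQ ∘ v) := li.map hdisj
  obtain ⟨φ, hφ⟩ := exists_dual_li (W.mkQ ∘ v) liQ w
  refine ⟨φ.comp W.mkQ, ?_, fun i => hφ i⟩
  apply LinearMap.ext; intro c
  have h0 : W.mkQ (DmP p c) = 0 := by
    rw [Submodule.mkQ_apply, Submodule.Quotient.mk_eq_zero]
    exact ⟨c, rfl⟩
  show φ (W.mkQ (DmP p c)) = (0 : Polynomial K →ₗ[K] K) c
  rw [h0, map_zero, LinearMap.zero_apply]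

/-- Solving `φ ∘ f = ρ` for injective `f`. -/
lemma exists_comp_eq_of_inj (f : Polynomial K →ₗ[K] Polynomial K)
    (hf : LinearMap.ker f = ⊥) (ρ : Polynomial K →ₗ[K] K) :
    ∃ φ : Polynomial K →ₗ[K] K, φ.comp f = ρ := by
  obtain ⟨g, hg⟩ := f.exists_leftInverse_of_injective hf
  exact ⟨ρ.comp g, by rw [LinearMap.comp_assoc, hg, LinearMap.comp_id]⟩

lemma deriv_surjective : Function.Surjective (Polynomial.derivative (R := K)) := by
  intro q
  refine ⟨q.sum fun n c => Polynomial.C (c / (n + 1)) * Polynomial.X ^ (n + 1), ?_⟩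
  rw [Polynomial.sum, map_sum]
  have : ∀ n ∈ q.support, Polynomial.derivative
      (Polynomial.C (q.coeff n / (n + 1)) * Polynomial.X ^ (n + 1))
      = Polynomial.C (q.coeff n) * Polynomial.X ^ n := by
    intro n _
    rw [Polynomial.derivative_C_mul_X_pow, Nat.add_sub_cancel, Nat.cast_add, Nat.cast_one,
      div_mul_cancel₀ _ (Nat.cast_add_one_ne_zero n)]
  rw [Finset.sum_congr rfl this]
  exact Polynomial.sum_C_mul_X_pow_eq q

lemma comp_der_eq_zero {φ : Polynomial K →ₗ[K] K}
    (h : φ.comp (Polynomial.derivative : Polynomial K →ₗ[K] Polynomial K) = 0) : φ = 0 := by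
  apply LinearMap.ext; intro q
  obtain ⟨c, rfl⟩ := deriv_surjective (K := K) q
  exact LinearMap.congr_fun h c

/-- Solving `φ ∘ derivative = ρ` when `ρ 1 = 0`. -/
lemma exists_comp_der_eq (ρ : Polynomial K →ₗ[K] K) (h1 : ρ 1 = 0) :
    ∃ φ : Polynomial K →ₗ[K] K,
      φ.comp (Polynomial.derivative : Polynomial K →ₗ[K] Polynomial K) = ρ := by
  obtain ⟨g, hg⟩ := (Polynomial.derivative : Polynomial K →ₗ[K] Polynomial K)
    |>.exists_rightInverse_of_surjective (LinearMap.range_eq_top.2 deriv_surjective)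
  refine ⟨ρ.comp g, ?_⟩
  apply LinearMap.ext; intro c
  have hder : Polynomial.derivative (g (Polynomial.derivative c) - c) = 0 := by
    rw [map_sub, sub_eq_zero]
    exact LinearMap.congr_fun hg (Polynomial.derivative c)
  have hC := Polynomial.eq_C_of_derivative_eq_zero hder
  have : g (Polynomial.derivative c) = c + Polynomial.C ((g (Polynomial.derivative c) - c).coeff 0) := by
    rw [← hC]; ring
  rw [LinearMap.comp_apply, LinearMap.comp_apply, this, map_add]
  have : (Polynomial.C ((g (Polynomial.derivative c) - c).coeff 0) : Polynomial K)
      = ((g (Polynomial.derivative c) - c).coeff 0) • (1 : Polynomial K) := by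
    rw [Polynomial.smul_eq_C_mul, mul_one]
  rw [this, map_smul, h1, smul_zero, add_zero]

section Combinatorics

variable {τ : Type*} [Fintype τ] [DecidableEq τ]

/-- `E t` is the single-variable exponent vector. -/
def E (t : τ) : τ →₀ ℕ := Finsupp.single t 1

/-- total level of an exponent vector -/
def lvl (β : τ →₀ ℕ) : ℕ := ∑ t, β t

lemma E_apply (t t' : τ) : E t t' = if t = t' then 1 else 0 := Finsupp.single_apply

lemma E_apply_self (t : τ) : E t t = 1 := by rw [E_apply, if_pos rfl]

lemma E_ne_zero (t : τ) : E t ≠ 0 := by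
  intro h
  have := DFunLike.congr_fun h t
  rw [E_apply_self] at this
  simp at this

lemma E_inj {t t' : τ} (h : E t = E t') : t = t' := by
  by_contra hne
  have := DFunLike.congr_fun h t
  rw [E_apply_self, E_apply, if_neg (fun hh => hne hh.symm)] at this
  simp at this

lemma lvl_zero : lvl (0 : τ →₀ ℕ) = 0 := by simp [lvl]

lemma lvl_eq_zero {β : τ →₀ ℕ} (h : lvl β = 0) : β = 0 := by
  have := Finset.sum_eq_zero_iff.mp h
  ext t
  simpa using this t (Finset.mem_univ t)

lemma lvl_add (β γ : τ →₀ ℕ) : lvl (β + γ) = lvl β + lvl γ := by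
  simp [lvl, Finsupp.add_apply, Finset.sum_add_distrib]

lemma lvl_eq_sum (β : τ →₀ ℕ) : lvl β = β.sum fun _ n => n :=
  (Finsupp.sum_fintype β (fun _ n => n) (fun _ => rfl)).symm

lemma lvl_E (t : τ) : lvl (E t) = 1 := by
  rw [lvl_eq_sum, E, Finsupp.sum_single_index rfl]

lemma sub_add_E {β : τ →₀ ℕ} {t : τ} (h : β t ≠ 0) : β - E t + E t = β := by
  apply tsub_add_cancel_of_le
  rw [E, Finsupp.single_le_iff]
  omega

lemma add_sub_E (β : τ →₀ ℕ) (t : τ) : β + E t - E t = β := add_tsub_cancel_right β (E t)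

lemma lvl_sub_E {β : τ →₀ ℕ} {t : τ} (h : β t ≠ 0) : lvl (β - E t) + 1 = lvl β := by
  conv_rhs => rw [← sub_add_E h]
  rw [lvl_add, lvl_E]

lemma lvl_eq_one {β : τ →₀ ℕ} (h : lvl β = 1) : ∃ t, β = E t := by
  have hne : β ≠ 0 := by
    intro h0; rw [h0, lvl_zero] at h; omega
  obtain ⟨t, ht⟩ := Finsupp.ne_iff.mp hne
  rw [Finsupp.coe_zero, Pi.zero_apply] at ht
  refine ⟨t, ?_⟩
  have h2 : lvl (β - E t) + 1 = 1 := by rw [lvl_sub_E ht, h]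
  have h3 : β - E t = 0 := lvl_eq_zero (by omega)
  have := sub_add_E ht
  rw [h3, zero_add] at this
  exact this.symm

lemma lvl_eq_two {β : τ →₀ ℕ} (h : lvl β = 2) : ∃ t1 t2, β = E t1 + E t2 := by
  have hne : β ≠ 0 := by
    intro h0; rw [h0, lvl_zero] at h; omega
  obtain ⟨t, ht⟩ := Finsupp.ne_iff.mp hne
  rw [Finsupp.coe_zero, Pi.zero_apply] at ht
  have h2 : lvl (β - E t) + 1 = 2 := by rw [lvl_sub_E ht, h]
  obtain ⟨t2, ht2⟩ := lvl_eq_one (show lvl (β - E t) = 1 by omega)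
  refine ⟨t2, t, ?_⟩
  have := sub_add_E ht
  rw [ht2] at this
  exact this.symm

end Combinatorics

section Construction

open scoped Classical

variable {τ : Type*} [Fintype τ] [DecidableEq τ]
variable (A B : τ → Polynomial K) (t0 : τ)

/-- `P A β = ∑ β t • A t`. -/
def P (β : τ →₀ ℕ) : Polynomial K := ∑ t, (β t : K) • A t

lemma P_zero : P A (0 : τ →₀ ℕ) = 0 := by simp [P]

lemma P_add (β γ : τ →₀ ℕ) : P A (β + γ) = P A β + P A γ := by
  simp only [P, Finsupp.add_apply, Nat.cast_add, add_smul]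
  rw [Finset.sum_add_distrib]

lemma P_E (t : τ) : P A (E t) = A t := by
  simp only [P, E_apply]
  rw [Finset.sum_eq_single t]
  · rw [if_pos rfl, Nat.cast_one, one_smul]
  · intro t' _ hne
    rw [if_neg (fun hh => hne hh.symm), Nat.cast_zero, zero_smul]
  · intro habs
    exact absurd (Finset.mem_univ t) habs

/-- the right-hand-side functional built from the previous level -/
def rho (prev : (τ →₀ ℕ) → (Polynomial K →ₗ[K] K)) (β : τ →₀ ℕ) :
    Polynomial K →ₗ[K] K :=
  - ∑ t : τ, (β t : K) • ((prev (β - E t)).comp (LinearMap.mulLeft K (B t)))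

lemma rho_zero (prev : (τ →₀ ℕ) → (Polynomial K →ₗ[K] K)) :
    rho B prev (0 : τ →₀ ℕ) = 0 := by
  simp [rho]

/-- The distinguished functional at level `E t0`. -/
def special : Polynomial K →ₗ[K] K :=
  if h : ∃ φ : Polynomial K →ₗ[K] K, φ.comp (DmP (A t0)) = 0 ∧ φ 1 = 1 then h.choose else 0

/-- prescribed values -/
def presc (β : τ →₀ ℕ) (t : τ) : K :=
  if t = t0 ∧ lvl β = 1 then -(∑ t1, (β t1 : K) * special A t0 (B t1)) else 0

/-- one step of the construction -/
def body (prev : (τ →₀ ℕ) → (Polynomial K →ₗ[K] K)) (β : τ →₀ ℕ) :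
    Polynomial K →ₗ[K] K :=
  if β = E t0 then special A t0
  else if h : ∃ φ : Polynomial K →ₗ[K] K, φ.comp (DmP (P A β)) = rho B prev β ∧
      ∀ t, P A (β + E t) = 0 → φ (B t) = presc A B t0 β t then h.choose else 0

/-- levelwise construction -/
def S : ℕ → (τ →₀ ℕ) → (Polynomial K →ₗ[K] K)
  | 0 => body A B t0 (fun _ => 0)
  | n + 1 => body A B t0 (S n)

/-- the final family of functionals -/
def theta (β : τ →₀ ℕ) : Polynomial K →ₗ[K] K := S A B t0 (lvl β) β

lemma theta_body {β : τ →₀ ℕ} {n : ℕ} (h : lvl β = n + 1) :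
    theta A B t0 β = body A B t0 (S A B t0 n) β := by
  rw [theta, h]; rfl

lemma theta_body0 {β : τ →₀ ℕ} (h : lvl β = 0) :
    theta A B t0 β = body A B t0 (fun _ => 0) β := by
  rw [theta, h]; rfl

lemma S_theta {γ : τ →₀ ℕ} {n : ℕ} (h : lvl γ = n) :
    S A B t0 n γ = theta A B t0 γ := by
  rw [theta, h]

lemma hB_ne (hli : ∀ t1 : τ, LinearIndependent K (fun x : {x : τ // A x = A t1} => B x.1))
    (t : τ) : B t ≠ 0 :=
  (hli t).ne_zero ⟨t, rfl⟩

lemma hA_ne (hd : ∀ t, (B t).degree < (A t).degree) (t : τ) : A t ≠ 0 := by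
  intro h
  have := hd t
  rw [h, Polynomial.degree_zero] at this
  exact not_lt_bot this

lemma hA_pos (hd : ∀ t, (B t).degree < (A t).degree)
    (hli : ∀ t1 : τ, LinearIndependent K (fun x : {x : τ // A x = A t1} => B x.1))
    (t : τ) : 0 < (A t).degree :=
  lt_of_le_of_lt (Polynomial.zero_le_degree_iff.2 (hB_ne A B hli t)) (hd t)

lemma A_eq_neg_P {β : τ →₀ ℕ} (i : {t : τ // P A (β + E t) = 0}) : A i.1 = - P A β := by
  have hi := i.2
  rw [P_add, P_E] at hi
  exact eq_neg_of_add_eq_zero_right hi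

set_option maxHeartbeats 1000000 in
lemma li_cond (hli : ∀ t1 : τ, LinearIndependent K (fun x : {x : τ // A x = A t1} => B x.1))
    (β : τ →₀ ℕ) :
    LinearIndependent K (fun i : {t : τ // P A (β + E t) = 0} => B i.1) := by
  rcases isEmpty_or_nonempty {t : τ // P A (β + E t) = 0} with h | h
  · exact linearIndependent_empty_type
  · obtain ⟨t1⟩ := h
    have key : ∀ i : {t : τ // P A (β + E t) = 0}, A i.1 = A t1.1 := by
      intro i
      rw [A_eq_neg_P A i, A_eq_neg_P A t1]
    exact (hli t1.1).comp
      (fun i : {t : τ // P A (β + E t) = 0} => (⟨i.1, key i⟩ : {x : τ // A x = A t1.1}))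
      (fun i j hij => by apply Subtype.ext; have h2 := congrArg Subtype.val hij; simpa using h2)

lemma special_spec (hd : ∀ t, (B t).degree < (A t).degree)
    (hli : ∀ t1 : τ, LinearIndependent K (fun x : {x : τ // A x = A t1} => B x.1)) :
    (special A t0).comp (DmP (A t0)) = 0 ∧ special A t0 1 = 1 := by
  have hex : ∃ φ : Polynomial K →ₗ[K] K, φ.comp (DmP (A t0)) = 0 ∧ φ 1 = 1 := by
    obtain ⟨δ, h1, h2⟩ := exists_dual (hA_ne A B hd t0) (fun _ : Unit => (1 : Polynomial K))
      (linearIndependent_unique_iff.mpr one_ne_zero)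
      (fun _ => by rw [Polynomial.degree_one]; exact hA_pos A B hd hli t0)
      (fun _ => (1 : K))
    exact ⟨δ, h1, h2 ()⟩
  rw [special, dif_pos hex]
  exact hex.choose_spec

lemma theta_zero : theta A B t0 0 = 0 := by
  rw [theta_body0 A B t0 lvl_zero, body, if_neg (fun h => E_ne_zero t0 h.symm)]
  split_ifs with h
  · apply comp_der_eq_zero
    have hs := h.choose_spec.1
    have e : DmP (P A (0 : τ →₀ ℕ)) = (Polynomial.derivative : Polynomial K →ₗ[K] Polynomial K) := by
      rw [P_zero, DmP_zero]
    rw [← e, hs, rho_zero]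
  · rfl

lemma theta_Et0 : theta A B t0 (E t0) = special A t0 := by
  rw [theta_body A B t0 (show lvl (E t0) = 0 + 1 by rw [lvl_E]), body, if_pos rfl]

lemma rho_apply (prev : (τ →₀ ℕ) → (Polynomial K →ₗ[K] K)) (β : τ →₀ ℕ) (c : Polynomial K) :
    rho B prev β c = -∑ t, (β t : K) * prev (β - E t) (B t * c) := by
  rw [rho, LinearMap.neg_apply, LinearMap.sum_apply]
  congr 1

lemma rho_prev {β : τ →₀ ℕ} {n : ℕ} (hβ : lvl β = n + 1) :
    rho B (S A B t0 n) β = rho B (theta A B t0) β := by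
  unfold rho
  congr 1
  apply Finset.sum_congr rfl
  intro t _
  by_cases h : β t = 0
  · rw [h]; simp
  · have hl : lvl (β - E t) = n := by have := lvl_sub_E h; omega
    rw [S_theta A B t0 hl]

lemma sum_E_mul (c : τ) (g : τ → K) : ∑ t, ((E c t : ℕ) : K) * g t = g c := by
  rw [Finset.sum_eq_single c]
  · rw [E_apply_self, Nat.cast_one, one_mul]
  · intro t _ hne
    rw [E_apply, if_neg (fun hh => hne hh.symm), Nat.cast_zero, zero_mul]
  · intro habs
    exact absurd (Finset.mem_univ c) habs

theorem main (hd : ∀ t, (B t).degree < (A t).degree)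
    (hli : ∀ t1 : τ, LinearIndependent K (fun x : {x : τ // A x = A t1} => B x.1)) :
    ∀ n (β : τ →₀ ℕ), lvl β = n →
    ((theta A B t0 β).comp (DmP (P A β)) = rho B (theta A B t0) β) ∧
    (β ≠ E t0 → ∀ t, P A (β + E t) = 0 → theta A B t0 β (B t) = presc A B t0 β t) := by
  intro n
  induction n using Nat.strong_induction_on with
  | _ n IH =>
  intro β hβ
  rcases n with _ | n
  · -- level 0
    have hβ0 : β = 0 := lvl_eq_zero hβ
    subst hβ0
    constructor
    · rw [theta_zero, rho_zero, LinearMap.zero_comp]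
    · intro _ t ht
      rw [zero_add, P_E] at ht
      exact absurd ht (hA_ne A B hd t)
  by_cases hE : β = E t0
  · subst hE
    constructor
    · rw [theta_Et0, P_E, (special_spec A B t0 hd hli).1]
      symm
      rw [rho, neg_eq_zero]
      apply Finset.sum_eq_zero
      intro t _
      by_cases ht : t = t0
      · subst ht
        rw [tsub_self, theta_zero]
        simp
      · rw [E_apply, if_neg (fun hh => ht hh.symm), Nat.cast_zero, zero_smul]
    · intro hne
      exact absurd rfl hne
  · -- β ≠ E t0, level n+1
    have hrho : rho B (S A B t0 n) β = rho B (theta A B t0) β := rho_prev A B t0 hβ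
    have hex : ∃ φ : Polynomial K →ₗ[K] K, φ.comp (DmP (P A β)) = rho B (S A B t0 n) β ∧
        ∀ t, P A (β + E t) = 0 → φ (B t) = presc A B t0 β t := by
      by_cases hP : P A β = 0
      · -- surjective (derivative) case; need the constraint
        have hn1 : 1 ≤ n := by
          by_contra hn0
          have hn0' : n = 0 := by omega
          subst hn0'
          obtain ⟨t1, rfl⟩ := lvl_eq_one hβ
          rw [P_E] at hP
          exact absurd hP (hA_ne A B hd t1)
        have hcon : rho B (theta A B t0) β 1 = 0 := by
          rw [rho_apply, neg_eq_zero]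
          by_cases hcase : β t0 ≠ 0 ∧ lvl β = 2
          · -- β = E t0 + E tx
            obtain ⟨ht0, hl2⟩ := hcase
            have hextx : ∃ tx, β = E t0 + E tx := by
              obtain ⟨t1, t2, h12⟩ := lvl_eq_two hl2
              by_cases h1 : t1 = t0
              · exact ⟨t2, by rw [h12, h1]⟩
              · by_cases h2 : t2 = t0
                · exact ⟨t1, by rw [h12, h2, add_comm]⟩
                · exfalso
                  apply ht0
                  rw [h12, Finsupp.add_apply, E_apply, E_apply, if_neg h1, if_neg h2]
            obtain ⟨tx, hβx⟩ := hextx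
            have htx : tx ≠ t0 := by
              intro h
              rw [h] at hβx
              rw [hβx, P_add, P_E] at hP
              exact absurd (add_self_eq_zero.mp hP) (hA_ne A B hd t0)
            have hcoef : ∀ t : τ, ((β t : ℕ) : K) = ((E t0 t : ℕ) : K) + ((E tx t : ℕ) : K) := by
              intro t
              rw [hβx, Finsupp.add_apply, Nat.cast_add]
            calc ∑ t, (β t : K) * theta A B t0 (β - E t) (B t * 1)
                = ∑ t, (((E t0 t : ℕ) : K) * theta A B t0 (β - E t) (B t * 1)
                  + ((E tx t : ℕ) : K) * theta A B t0 (β - E t) (B t * 1)) := by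
                  apply Finset.sum_congr rfl
                  intro t _
                  rw [hcoef t, add_mul]
              _ = theta A B t0 (β - E t0) (B t0 * 1) + theta A B t0 (β - E tx) (B tx * 1) := by
                  rw [Finset.sum_add_distrib, sum_E_mul, sum_E_mul]
              _ = 0 := by
                  have hsub1 : β - E t0 = E tx := by rw [hβx, add_tsub_cancel_left]
                  have hsub2 : β - E tx = E t0 := by rw [hβx, add_tsub_cancel_right]
                  rw [hsub1, hsub2, mul_one, mul_one, theta_Et0]
                  have hIH := (IH 1 (by omega) (E tx) (lvl_E tx)).2
                    (fun h => htx (E_inj h)) t0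
                    (by rw [show E tx + E t0 = β by rw [hβx, add_comm]]; exact hP)
                  rw [hIH, presc, if_pos ⟨rfl, lvl_E tx⟩, sum_E_mul]
                  ring
          · -- all terms vanish
            apply Finset.sum_eq_zero
            intro t _
            by_cases h0 : β t = 0
            · rw [h0, Nat.cast_zero, zero_mul]
            · have hlγ : lvl (β - E t) = n := by have := lvl_sub_E h0; omega
              have hγne : β - E t ≠ E t0 := by
                intro hg
                have hrec : β = E t0 + E t := by rw [← sub_add_E h0, hg]
                apply hcase
                constructor
                · rw [hrec, Finsupp.add_apply, E_apply_self]
                  omega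
                · rw [hrec, lvl_add, lvl_E, lvl_E]
              have hPcond : P A ((β - E t) + E t) = 0 := by rw [sub_add_E h0]; exact hP
              have hIH := (IH n (by omega) (β - E t) hlγ).2 hγne t hPcond
              rw [mul_one, hIH, presc, if_neg, mul_zero]
              rintro ⟨rfl, hlv1⟩
              apply hcase
              refine ⟨h0, ?_⟩
              have := lvl_sub_E h0
              omega
        obtain ⟨φ, hφ⟩ := exists_comp_der_eq (rho B (theta A B t0) β) hcon
        refine ⟨φ, ?_, ?_⟩
        · rw [hP, DmP_zero, hrho]
          exact hφ
        · intro t ht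
          exfalso
          rw [P_add, P_E, hP, zero_add] at ht
          exact absurd ht (hA_ne A B hd t)
      · -- injective case
        obtain ⟨φ0, hφ0⟩ := exists_comp_eq_of_inj (DmP (P A β)) (DmP_ker hP)
          (rho B (S A B t0 n) β)
        obtain ⟨δ, hδ1, hδ2⟩ := exists_dual hP (fun i : {t : τ // P A (β + E t) = 0} => B i.1)
          (li_cond A B hli β)
          (fun i => by
            have hdi := hd i.1
            rw [show (A i.1).degree = (P A β).degree by rw [A_eq_neg_P A i, Polynomial.degree_neg]]
              at hdi
            exact hdi)
          (fun i => presc A B t0 β i.1 - φ0 (B i.1))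
        refine ⟨φ0 + δ, ?_, ?_⟩
        · rw [LinearMap.add_comp, hφ0, hδ1, add_zero]
        · intro t ht
          have := hδ2 ⟨t, ht⟩
          rw [LinearMap.add_apply, this]
          ring
    have hθ : theta A B t0 β = if h : (∃ φ : Polynomial K →ₗ[K] K,
        φ.comp (DmP (P A β)) = rho B (S A B t0 n) β ∧
        ∀ t, P A (β + E t) = 0 → φ (B t) = presc A B t0 β t) then h.choose else 0 := by
      rw [theta_body A B t0 hβ, body, if_neg hE]
    constructor
    · rw [hθ, dif_pos hex, ← hrho]
      exact hex.choose_spec.1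
    · intro _ t ht
      rw [hθ, dif_pos hex]
      exact hex.choose_spec.2 t ht

lemma theta_Et0_one (hd : ∀ t, (B t).degree < (A t).degree)
    (hli : ∀ t1 : τ, LinearIndependent K (fun x : {x : τ // A x = A t1} => B x.1)) :
    theta A B t0 (E t0) 1 = 1 := by
  rw [theta_Et0]
  exact (special_spec A B t0 hd hli).2

lemma Eqn_apply (hd : ∀ t, (B t).degree < (A t).degree)
    (hli : ∀ t1 : τ, LinearIndependent K (fun x : {x : τ // A x = A t1} => B x.1))
    (β : τ →₀ ℕ) (c : Polynomial K) :
    theta A B t0 β (Polynomial.derivative c + P A β * c)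
      + ∑ t, (β t : K) * theta A B t0 (β - E t) (B t * c) = 0 := by
  have h := (main A B t0 hd hli (lvl β) β rfl).1
  have h2 := LinearMap.congr_fun h c
  rw [LinearMap.comp_apply, DmP_apply, rho_apply] at h2
  rw [h2]
  ring

end Construction

section Bridge

open scoped Classical

variable {τ : Type*} [Fintype τ] [DecidableEq τ]
variable (A B : τ → Polynomial K) (t0 : τ)

lemma some_sub_none (m : Option τ →₀ ℕ) :
    (m - Finsupp.single (none : Option τ) 1).some = m.some := by
  ext t
  rw [Finsupp.some_apply, Finsupp.some_apply, Finsupp.tsub_apply, Finsupp.single_apply,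
    if_neg (Option.some_ne_none t).symm, tsub_zero]

lemma none_sub_none (m : Option τ →₀ ℕ) :
    ((m - Finsupp.single (none : Option τ) 1 : Option τ →₀ ℕ)) none = m none - 1 := by
  rw [Finsupp.tsub_apply, Finsupp.single_eq_same]

lemma some_sub_some (m : Option τ →₀ ℕ) (t : τ) :
    (m - Finsupp.single (some t : Option τ) 1).some = m.some - E t := by
  ext t'
  rw [Finsupp.some_apply, Finsupp.tsub_apply, Finsupp.tsub_apply, Finsupp.some_apply,
    Finsupp.single_apply, E_apply]
  by_cases h : t = t'
  · rw [if_pos h, if_pos (by rw [h])]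
  · rw [if_neg h, if_neg (fun hh => h (Option.some_injective τ hh))]

lemma none_sub_some (m : Option τ →₀ ℕ) (t : τ) :
    ((m - Finsupp.single (some t : Option τ) 1 : Option τ →₀ ℕ)) none = m none := by
  rw [Finsupp.tsub_apply, Finsupp.single_apply, if_neg (Option.some_ne_none t), tsub_zero]

lemma some_add_single_none (m : Option τ →₀ ℕ) (n : ℕ) :
    (m + Finsupp.single (none : Option τ) n).some = m.some := by
  rw [Finsupp.some_add, Finsupp.some_single_none, add_zero]

lemma none_add_single_none (m : Option τ →₀ ℕ) (n : ℕ) :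
    ((m + Finsupp.single (none : Option τ) n : Option τ →₀ ℕ)) none = m none + n := by
  rw [Finsupp.add_apply, Finsupp.single_eq_same]

/-- The coefficient functional. -/
def uu : (Option τ →₀ ℕ) → K := fun m => theta A B t0 m.some (Polynomial.X ^ (m none))

/-- The total obstruction functional on the polynomial ring. -/
def Theta : MvPolynomial (Option τ) K →ₗ[K] K :=
  (basisMonomials (Option τ) K).constr K (uu A B t0)

lemma Theta_monomial (m : Option τ →₀ ℕ) (c : K) :
    Theta A B t0 (monomial m c) = c * uu A B t0 m := by
  have h1 : (monomial m c : MvPolynomial (Option τ) K) = c • monomial m 1 := by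
    rw [MvPolynomial.smul_monomial, smul_eq_mul, mul_one]
  have h2 : (monomial m (1 : K) : MvPolynomial (Option τ) K) = basisMonomials (Option τ) K m := by
    rw [MvPolynomial.coe_basisMonomials]
  rw [h1, map_smul, h2, Theta, Module.Basis.constr_basis, smul_eq_mul]

lemma Theta_aeval_mul (q : Polynomial K) (m : Option τ →₀ ℕ) :
    Theta A B t0 (Polynomial.aeval (X none) q * monomial m 1)
      = theta A B t0 m.some (q * Polynomial.X ^ (m none)) := by
  induction q using Polynomial.induction_on' with
  | add p q hp hq => rw [map_add, add_mul, map_add, hp, hq, add_mul, map_add]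
  | monomial n c =>
    rw [Polynomial.aeval_monomial, MvPolynomial.X_pow_eq_monomial]
    have h1 : (algebraMap K (MvPolynomial (Option τ) K)) c
        * monomial (Finsupp.single (none : Option τ) n) 1 * monomial m 1
        = monomial (m + Finsupp.single (none : Option τ) n) c := by
      rw [MvPolynomial.algebraMap_eq, MvPolynomial.C_mul_monomial, MvPolynomial.monomial_mul,
        mul_one, mul_one, add_comm]
    have h2 : (Polynomial.monomial n c : Polynomial K) * Polynomial.X ^ (m none)
        = c • Polynomial.X ^ ((m + Finsupp.single (none : Option τ) n) none) := by
      rw [← Polynomial.C_mul_X_pow_eq_monomial, Polynomial.smul_eq_C_mul,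
        none_add_single_none]
      rw [mul_assoc, ← pow_add, add_comm (m none) n]
    rw [h1, Theta_monomial, h2, map_smul, smul_eq_mul]
    congr 1
    rw [uu, some_add_single_none]

lemma Theta_D_monomial
    (hd : ∀ t, (B t).degree < (A t).degree)
    (hli : ∀ t1 : τ, LinearIndependent K (fun x : {x : τ // A x = A t1} => B x.1))
    (m : Option τ →₀ ℕ) :
    Theta A B t0 ((mkDerivation K (fun v : Option τ =>
      Option.rec (1 : MvPolynomial (Option τ) K)
        (fun t => Polynomial.aeval (X none) (A t) * X (some t)
          + Polynomial.aeval (X none) (B t)) v)) (monomial m (1 : K))) = 0 := by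
  set Dval : Option τ → MvPolynomial (Option τ) K := fun v =>
    Option.rec (1 : MvPolynomial (Option τ) K)
      (fun t => Polynomial.aeval (X none) (A t) * X (some t)
        + Polynomial.aeval (X none) (B t)) v with hDval
  set β := m.some with hβ
  set k := m none with hk
  rw [MvPolynomial.mkDerivation_monomial, one_smul]
  rw [Finsupp.sum_fintype _ _ (fun v => by rw [Nat.cast_zero, map_zero, zero_smul])]
  rw [map_sum, Fintype.sum_option]
  have hnone : Theta A B t0 ((MvPolynomial.monomial (m - Finsupp.single none 1) ((m none : K))) • Dval none)
      = theta A B t0 β (Polynomial.derivative (Polynomial.X ^ k)) := by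
    show Theta A B t0 ((MvPolynomial.monomial (m - Finsupp.single none 1) ((m none : K))) • (1 : MvPolynomial (Option τ) K)) = _
    rw [smul_eq_mul, mul_one, Theta_monomial, Polynomial.derivative_X_pow]
    rw [show (Polynomial.C ((k : K)) * Polynomial.X ^ (k - 1) : Polynomial K)
      = (k : K) • Polynomial.X ^ (k-1) from (Polynomial.smul_eq_C_mul _).symm]
    rw [map_smul, smul_eq_mul]
    congr 1
    rw [uu, some_sub_none, none_sub_none]
  have hsome : ∀ t : τ, Theta A B t0
      ((MvPolynomial.monomial (m - Finsupp.single (some t) 1) ((m (some t) : K))) • Dval (some t))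
      = (β t : K) * theta A B t0 β (A t * Polynomial.X ^ k)
        + (β t : K) * theta A B t0 (β - E t) (B t * Polynomial.X ^ k) := by
    intro t
    have hβt : β t = m (some t) := rfl
    have hsm : (MvPolynomial.monomial (m - Finsupp.single (some t) 1) ((m (some t) : K))
          : MvPolynomial (Option τ) K)
        = ((m (some t) : K)) • MvPolynomial.monomial (m - Finsupp.single (some t) 1) 1 := by
      rw [MvPolynomial.smul_monomial, smul_eq_mul, mul_one]
    rw [hsm, smul_assoc, map_smul, smul_eq_mul, hβt]
    by_cases h0 : m (some t) = 0
    · rw [h0, Nat.cast_zero, zero_mul, zero_mul, zero_mul, add_zero]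
    · rw [← mul_add]
      congr 1
      have hDs : Dval (some t) = Polynomial.aeval (X none) (A t) * X (some t)
          + Polynomial.aeval (X none) (B t) := rfl
      rw [smul_eq_mul, hDs]
      rw [mul_add, map_add]
      have hp1 : (MvPolynomial.monomial (m - Finsupp.single (some t) 1) 1 : MvPolynomial (Option τ) K)
          * (Polynomial.aeval (X none) (A t) * X (some t))
          = Polynomial.aeval (X none) (A t) * MvPolynomial.monomial m 1 := by
        rw [show (X (some t) : MvPolynomial (Option τ) K)
          = MvPolynomial.monomial (Finsupp.single (some t) 1) 1 by
            rw [← pow_one (X (some t) : MvPolynomial (Option τ) K), MvPolynomial.X_pow_eq_monomial]]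
        rw [mul_comm (Polynomial.aeval (X none) (A t)) (MvPolynomial.monomial (Finsupp.single (some t) 1) 1)]
        rw [← mul_assoc, MvPolynomial.monomial_mul, mul_one]
        rw [show (m - Finsupp.single (some t) 1) + Finsupp.single (some t) 1 = m from by
          apply tsub_add_cancel_of_le
          rw [Finsupp.single_le_iff]
          omega]
        ring
      have hp2 : (MvPolynomial.monomial (m - Finsupp.single (some t) 1) 1 : MvPolynomial (Option τ) K)
          * Polynomial.aeval (X none) (B t)
          = Polynomial.aeval (X none) (B t) * MvPolynomial.monomial (m - Finsupp.single (some t) 1) 1 :=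
        mul_comm _ _
      rw [hp1, hp2, Theta_aeval_mul, Theta_aeval_mul, some_sub_some, none_sub_some]
  rw [hnone, Finset.sum_congr rfl (fun t _ => hsome t), Finset.sum_add_distrib]
  have hPsum : ∑ t : τ, (β t : K) * theta A B t0 β (A t * Polynomial.X ^ k)
      = theta A B t0 β (P A β * Polynomial.X ^ k) := by
    rw [P, Finset.sum_mul, map_sum]
    apply Finset.sum_congr rfl
    intro t _
    rw [smul_mul_assoc, map_smul, smul_eq_mul]
  rw [hPsum]
  have := Eqn_apply A B t0 hd hli β (Polynomial.X ^ k)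
  rw [map_add] at this
  rw [← add_assoc]
  exact this

lemma uu_apply (m : Option τ →₀ ℕ) :
    uu A B t0 m = theta A B t0 m.some (Polynomial.X ^ (m none)) := rfl

theorem Theta_D_zero
    (hd : ∀ t, (B t).degree < (A t).degree)
    (hli : ∀ t1 : τ, LinearIndependent K (fun x : {x : τ // A x = A t1} => B x.1))
    (D : Derivation K (MvPolynomial (Option τ) K) (MvPolynomial (Option τ) K))
    (hDx : D (X none) = 1)
    (hDy : ∀ t : τ, D (X (some t)) = Polynomial.aeval (X none) (A t) * X (some t)
      + Polynomial.aeval (X none) (B t)) :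
    ∀ F, Theta A B t0 (D F) = 0 := by
  have hD : D = mkDerivation K (fun v : Option τ =>
      Option.rec (1 : MvPolynomial (Option τ) K)
        (fun t => Polynomial.aeval (X none) (A t) * X (some t)
          + Polynomial.aeval (X none) (B t)) v) := by
    apply MvPolynomial.derivation_ext
    intro v
    rw [MvPolynomial.mkDerivation_X]
    cases v with
    | none => exact hDx
    | some t => exact hDy t
  intro F
  show Theta A B t0 (D.toLinearMap F) = 0
  conv_lhs => rw [MvPolynomial.as_sum F]
  rw [map_sum, map_sum]
  apply Finset.sum_eq_zero
  intro m _
  have h1 : MvPolynomial.monomial m (MvPolynomial.coeff m F)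
      = (MvPolynomial.coeff m F) • MvPolynomial.monomial m (1 : K) := by
    rw [MvPolynomial.smul_monomial, smul_eq_mul, mul_one]
  rw [h1, map_smul, map_smul, smul_eq_mul]
  have h2 : D.toLinearMap (MvPolynomial.monomial m (1 : K))
      = (mkDerivation K (fun v : Option τ =>
      Option.rec (1 : MvPolynomial (Option τ) K)
        (fun t => Polynomial.aeval (X none) (A t) * X (some t)
          + Polynomial.aeval (X none) (B t)) v)) (MvPolynomial.monomial m (1 : K)) := by
    rw [hD]; rfl
  rw [h2, Theta_D_monomial A B t0 hd hli m, mul_zero]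

end Bridge

end

end Statement2Aux

/-- A `K`-subspace `M` of `R` is a Mathieu–Zhao space if for all `a, b ∈ R` such that
`a ^ m ∈ M` for all `m ≥ 1`, there exists `N` such that `b * a ^ m ∈ M` for all `m ≥ N`. -/
def IsMathieuZhao (K : Type*) {R : Type*} [Field K] [CommRing R] [Algebra K R]
    (M : Submodule K R) : Prop :=
  ∀ a b : R, (∀ m : ℕ, 1 ≤ m → a ^ m ∈ M) →
    ∃ N : ℕ, ∀ m : ℕ, N ≤ m → b * a ^ m ∈ M

/-- A `K`-derivation `D` of `R` is simple if the only ideals `I` of `R` with `D(I) ⊆ I`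
are `0` and `R`. -/
def Derivation.IsSimple {K R : Type*} [CommRing K] [CommRing R] [Algebra K R]
    (D : Derivation K R R) : Prop :=
  ∀ I : Ideal R, (∀ a ∈ I, D a ∈ I) → I = ⊥ ∨ I = ⊤

/-- For the Shamsuddin derivation `D = ∂ₓ + Σᵢⱼ (aᵢ(x) yᵢⱼ + bᵢⱼ(x)) ∂ᵢⱼ`
(with `aᵢ ≠ aₗ` for `i ≠ l`): if `deg aᵢ > deg bᵢⱼ` for all `i, j` and the `bᵢ₁, …, bᵢᵣᵢ`
are linearly independent over `K` for each `i`, then `Im D` is not a Mathieu–Zhao space. -/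
theorem statement2 (K : Type*) [Field K] [CharZero K]
    (s : ℕ) (hs : 1 ≤ s) (r : Fin s → ℕ) (hr : ∀ i, 1 ≤ r i)
    (a : Fin s → Polynomial K) (b : (i : Fin s) → Fin (r i) → Polynomial K)
    (ha : ∀ i l : Fin s, i ≠ l → a i ≠ a l)
    (D : Derivation K (MvPolynomial (Option (Σ i : Fin s, Fin (r i))) K)
      (MvPolynomial (Option (Σ i : Fin s, Fin (r i))) K))
    (hDx : D (X none) = 1)
    (hDy : ∀ (i : Fin s) (j : Fin (r i)),
      D (X (some ⟨i, j⟩)) =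
        Polynomial.aeval (X none) (a i) * X (some ⟨i, j⟩)
          + Polynomial.aeval (X none) (b i j))
    (hdeg : ∀ (i : Fin s) (j : Fin (r i)), (b i j).degree < (a i).degree)
    (hli : ∀ i : Fin s, LinearIndependent K (b i)) :
    ¬ IsMathieuZhao K (LinearMap.range D.toLinearMap) := by
  classical
  intro hMZ
  let A : (Σ i : Fin s, Fin (r i)) → Polynomial K := fun t => a t.1
  let B : (Σ i : Fin s, Fin (r i)) → Polynomial K := fun t => b t.1 t.2
  let t0 : (Σ i : Fin s, Fin (r i)) := ⟨⟨0, hs⟩, ⟨0, hr ⟨0, hs⟩⟩⟩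
  have hd : ∀ t : (Σ i : Fin s, Fin (r i)), (B t).degree < (A t).degree := fun t => hdeg t.1 t.2
  have hliA : ∀ t1 : (Σ i : Fin s, Fin (r i)),
      LinearIndependent K (fun x : {x : (Σ i : Fin s, Fin (r i)) // A x = A t1} => B x.1) := by
    intro t1
    have hfst : ∀ x : {x : (Σ i : Fin s, Fin (r i)) // A x = A t1}, x.1.1 = t1.1 := by
      intro x
      by_contra hne
      exact ha x.1.1 t1.1 hne x.2
    have hcomp : (fun x : {x : (Σ i : Fin s, Fin (r i)) // A x = A t1} => B x.1)
        = (b t1.1) ∘ (fun x : {x : (Σ i : Fin s, Fin (r i)) // A x = A t1} =>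
            Fin.cast (congrArg r (hfst x)) x.1.2) := by
      funext x
      obtain ⟨⟨i, j⟩, hx⟩ := x
      show b i j = b t1.1 (Fin.cast _ j)
      have hij : i = t1.1 := hfst ⟨⟨i, j⟩, hx⟩
      subst hij
      rfl
    rw [hcomp]
    apply (hli t1.1).comp
    intro x y hxy
    have h1 : x.1.1 = y.1.1 := (hfst x).trans (hfst y).symm
    have h2 : (x.1.2 : ℕ) = (y.1.2 : ℕ) := by
      have := congrArg Fin.val hxy
      simpa [Fin.coe_cast] using this
    apply Subtype.ext
    obtain ⟨⟨i, j⟩, hx⟩ := x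
    obtain ⟨⟨i', j'⟩, hy⟩ := y
    simp only at h1 h2
    subst h1
    exact congrArg (Sigma.mk i) (Fin.ext h2)
  have hDy' : ∀ t : (Σ i : Fin s, Fin (r i)),
      D (X (some t)) = Polynomial.aeval (X none) (A t) * X (some t)
      + Polynomial.aeval (X none) (B t) := fun t => hDy t.1 t.2
  obtain ⟨N, hN⟩ := hMZ 1 (X (some t0)) (fun m _ => by
    rw [one_pow]
    exact ⟨X none, hDx⟩)
  have hmem := hN N le_rfl
  rw [one_pow, mul_one] at hmem
  obtain ⟨F, hF⟩ := hmem
  have h0 : Statement2Aux.Theta A B t0 (D F) = 0 :=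
    Statement2Aux.Theta_D_zero A B t0 hd hliA D hDx hDy' F
  have hDF : D F = X (some t0) := hF
  rw [hDF] at h0
  have h1 : Statement2Aux.Theta A B t0 (X (some t0)) = 1 := by
    have hx : (X (some t0) : MvPolynomial (Option (Σ i : Fin s, Fin (r i))) K)
        = MvPolynomial.monomial (Finsupp.single (some t0 : Option (Σ i : Fin s, Fin (r i))) 1) 1 := by
      rw [← pow_one (X (some t0) : MvPolynomial (Option (Σ i : Fin s, Fin (r i))) K),
        MvPolynomial.X_pow_eq_monomial]
    rw [hx, Statement2Aux.Theta_monomial, one_mul, Statement2Aux.uu_apply,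
      Finsupp.some_single_some]
    have hnone0 : (Finsupp.single (some t0 : Option (Σ i : Fin s, Fin (r i))) 1) none = 0 := by
      rw [Finsupp.single_apply, if_neg (Option.some_ne_none t0)]
    rw [hnone0, pow_zero]
    exact Statement2Aux.theta_Et0_one A B t0 hd hliA
  rw [h1] at h0
  exact one_ne_zero h0
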